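/- Define, for (β0,β1) ∈ B := [−π/2, π/2]², the function β := β0·ℓ²_0 + f̃(β0,β1)·ℓ²_{1/2} + β1·ℓ²_1 and the angle defect δ(β0,β1) := arg I(β) (well defined since I(β) ≠ 0 on B). Then there exist constants c1 > 0 and c2 > 0 such that |δ(β0,β1)| ≤ min{c1, c2·|β0+β1|·(β0² + β1²)} for all (β0,β1) ∈ B. -/

import Mathlib

open scoped Real

/-- Quadratic Lagrange polynomial at the break point `0` (nodes `0, 1/2, 1`). -/
noncomputable def lag0 (t : ℝ) : ℝ := (t - 1) * (2 * t - 1)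

/-- Quadratic Lagrange polynomial at the break point `1/2` (nodes `0, 1/2, 1`). -/
noncomputable def lagHalf (t : ℝ) : ℝ := 4 * t * (1 - t)

/-- Quadratic Lagrange polynomial at the break point `1` (nodes `0, 1/2, 1`). -/
noncomputable def lag1 (t : ℝ) : ℝ := t * (2 * t - 1)

/-- `I(β,t) := ∫₀ᵗ exp(i·β(s)) ds`. -/
noncomputable def Iint (β : ℝ → ℝ) (t : ℝ) : ℂ :=
  ∫ s in (0:ℝ)..t, Complex.exp (Complex.I * (β s : ℂ))

/-- The explicit cubic approximation of the exact middle-angle function of clothoid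
two-point Hermite interpolation. -/
noncomputable def ftilde (b0 b1 : ℝ) : ℝ :=
  (b0 + b1) * ((b0 ^ 2 + b1 ^ 2) / 68 - b0 * b1 / 46 - 1 / 4)

/-- The angle function built from the boundary angles and the approximate middle angle. -/
noncomputable def βfun (b0 b1 : ℝ) (t : ℝ) : ℝ :=
  b0 * lag0 t + ftilde b0 b1 * lagHalf t + b1 * lag1 t

/- ### Auxiliary material -/


lemma sin_ge_sub_cube' {x : ℝ} (hx : 0 ≤ x) : x - x^3/6 ≤ Real.sin x := by
  have key : MonotoneOn (fun y : ℝ => Real.sin y - y + y^3/6) (Set.Ici 0) := by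
    apply monotoneOn_of_deriv_nonneg (convex_Ici 0)
    · fun_prop
    · intro y _
      exact (((Real.hasDerivAt_sin y).sub (hasDerivAt_id y)).add
        (((hasDerivAt_pow 3 y)).div_const 6)).differentiableAt.differentiableWithinAt
    · intro y hy
      have hd : HasDerivAt (fun y : ℝ => Real.sin y - y + y^3/6)
          (Real.cos y - 1 + (3 * y^(3-1))/6) y :=
        ((Real.hasDerivAt_sin y).sub (hasDerivAt_id y)).add (((hasDerivAt_pow 3 y)).div_const 6)
      rw [hd.deriv]
      have := Real.one_sub_sq_div_two_le_cos (x := y)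
      norm_num
      nlinarith
  have h0 : (fun y : ℝ => Real.sin y - y + y^3/6) 0 ≤ (fun y : ℝ => Real.sin y - y + y^3/6) x :=
    key Set.self_mem_Ici hx hx
  simp at h0
  linarith

lemma abs_sin_sub_le (x : ℝ) : |Real.sin x - x| ≤ |x|^3/6 := by
  rcases le_total 0 x with hx | hx
  · rw [abs_of_nonneg hx, abs_le]
    constructor
    · have := sin_ge_sub_cube' hx; linarith
    · have := Real.sin_le hx; nlinarith [pow_nonneg hx 3]
  · have hx' : 0 ≤ -x := by linarith
    have h1 := sin_ge_sub_cube' hx'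
    have h2 := Real.sin_le hx'
    rw [Real.sin_neg] at h1 h2
    rw [abs_of_nonpos hx, abs_le]
    constructor <;> nlinarith [pow_nonneg hx' 3]

/-- The odd (about `t = 1/2`) component profile. -/
noncomputable def mmm (t : ℝ) : ℝ := (1 - 2*t)/2

/-- The even (about `t = 1/2`) component profile. -/
noncomputable def hhh (g t : ℝ) : ℝ := (2*t-1)^2/2 + g*(4*t*(1-t))

lemma beta_eq (b0 b1 t : ℝ) :
    βfun b0 b1 t = (b0-b1) * mmm t
      + (b0+b1) * hhh ((b0^2+b1^2)/68 - b0*b1/46 - 1/4) t := by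
  unfold βfun lag0 lagHalf lag1 ftilde mmm hhh; ring

@[fun_prop] lemma mmm_cont : Continuous mmm := by unfold mmm; fun_prop
@[fun_prop] lemma hhh_cont (g : ℝ) : Continuous (hhh g) := by unfold hhh; fun_prop
@[fun_prop] lemma beta_cont (b0 b1 : ℝ) : Continuous (βfun b0 b1) := by
  unfold βfun lag0 lagHalf lag1; fun_prop

lemma mmm_flip (t : ℝ) : mmm (1-t) = -mmm t := by unfold mmm; ring
lemma hhh_flip (g t : ℝ) : hhh g (1-t) = hhh g t := by unfold hhh; ring

lemma flip_integral (f : ℝ → ℝ) :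
    (∫ t in (0:ℝ)..1, f (1 - t)) = ∫ t in (0:ℝ)..1, f t := by
  simpa using intervalIntegral.integral_comp_sub_left f 1

lemma hhh_integral (g : ℝ) : (∫ t in (0:ℝ)..1, hhh g t) = 2*g/3 + 1/6 := by
  have h : ∀ t : ℝ, hhh g t = (2-4*g)*t^2 + ((4*g-2)*t + 1/2) := by
    intro t; unfold hhh; ring
  rw [intervalIntegral.integral_congr (fun t _ => h t)]
  rw [intervalIntegral.integral_add
      ((by fun_prop : Continuous fun t : ℝ => (2-4*g)*t^2).intervalIntegrable 0 1)
      ((by fun_prop : Continuous fun t : ℝ => (4*g-2)*t + 1/2).intervalIntegrable 0 1),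
    intervalIntegral.integral_add
      ((by fun_prop : Continuous fun t : ℝ => (4*g-2)*t).intervalIntegrable 0 1)
      (intervalIntegrable_const),
    intervalIntegral.integral_const_mul, intervalIntegral.integral_const_mul,
    integral_pow, integral_id, intervalIntegral.integral_const]
  norm_num; ring


lemma mm_bound {t : ℝ} (ht : t ∈ Set.Icc (0:ℝ) 1) : |mmm t| ≤ 1/2 := by
  rw [abs_le]; unfold mmm; constructor <;> [linarith [ht.2]; linarith [ht.1]]

lemma hh_lb' {g t : ℝ} (hgu : g ≤ 0) (ht : t ∈ Set.Icc (0:ℝ) 1) : g ≤ hhh g t := by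
  unfold hhh; nlinarith [sq_nonneg (2*t-1)]

lemma hh_ub' {g t : ℝ} (hgu : g ≤ 0) (ht : t ∈ Set.Icc (0:ℝ) 1) : hhh g t ≤ 1/2 := by
  unfold hhh
  nlinarith [mul_nonneg ht.1 (by linarith [ht.2] : (0:ℝ) ≤ 1 - t), sq_nonneg (2*t-1)]

lemma hh_abs' {g t : ℝ} (hgu : g ≤ 0) (hgl : -(31/100) ≤ g) (ht : t ∈ Set.Icc (0:ℝ) 1) :
    |hhh g t| ≤ 1/2 :=
  abs_le.2 ⟨by linarith [hh_lb' hgu ht], hh_ub' hgu ht⟩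

lemma K_pointwise {S D g t : ℝ} (hgu : g ≤ 0) (hgl : -(31/100) ≤ g)
    (ht : t ∈ Set.Icc (0:ℝ) 1) :
    |Real.sin (S * hhh g t) * Real.cos (D * mmm t) - S * hhh g t|
      ≤ |S|^3/48 + |S| * D^2/16 := by
  have h1 : |hhh g t| ≤ 1/2 := hh_abs' hgu hgl ht
  have h2 : |mmm t| ≤ 1/2 := mm_bound ht
  have h3 := abs_sin_sub_le (S * hhh g t)
  have habs_a : |S * hhh g t| ≤ |S| * (1/2) := by
    rw [abs_mul]; exact mul_le_mul_of_nonneg_left h1 (abs_nonneg S)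
  have ha3 : |S * hhh g t|^3 ≤ (|S| * (1/2))^3 :=
    pow_le_pow_left₀ (abs_nonneg _) habs_a 3
  have hm2 : (D * mmm t)^2 ≤ D^2 * (1/4) := by
    rw [mul_pow]
    have hmm : (mmm t)^2 ≤ (1/2)^2 := by
      rw [← sq_abs]; exact pow_le_pow_left₀ (abs_nonneg _) h2 2
    exact mul_le_mul_of_nonneg_left (by linarith) (sq_nonneg D)
  have hc1 : |Real.cos (D * mmm t) - 1| ≤ (D * mmm t)^2/2 := by
    have h4 := Real.one_sub_sq_div_two_le_cos (x := D * mmm t)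
    have h5 := Real.cos_le_one (D * mmm t)
    have h6 := sq_nonneg (D * mmm t)
    rw [abs_le]
    constructor <;> linarith
  have hcabs : |Real.cos (D * mmm t)| ≤ 1 := Real.abs_cos_le_one _
  calc |Real.sin (S * hhh g t) * Real.cos (D * mmm t) - S * hhh g t|
      = |(Real.sin (S * hhh g t) - S * hhh g t) * Real.cos (D * mmm t)
          + (S * hhh g t) * (Real.cos (D * mmm t) - 1)| := by congr 1; ring
    _ ≤ |(Real.sin (S * hhh g t) - S * hhh g t) * Real.cos (D * mmm t)|
          + |(S * hhh g t) * (Real.cos (D * mmm t) - 1)| := abs_add_le _ _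
    _ = |Real.sin (S * hhh g t) - S * hhh g t| * |Real.cos (D * mmm t)|
          + |S * hhh g t| * |Real.cos (D * mmm t) - 1| := by rw [abs_mul, abs_mul]
    _ ≤ |S|^3/48 + |S| * D^2/16 := by
        have t1 : |Real.sin (S * hhh g t) - S * hhh g t| * |Real.cos (D * mmm t)|
            ≤ |S * hhh g t|^3/6 := by
          calc |Real.sin (S * hhh g t) - S * hhh g t| * |Real.cos (D * mmm t)|
              ≤ |Real.sin (S * hhh g t) - S * hhh g t| * 1 :=
                mul_le_mul_of_nonneg_left hcabs (abs_nonneg _)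
            _ = |Real.sin (S * hhh g t) - S * hhh g t| := mul_one _
            _ ≤ |S * hhh g t|^3/6 := h3
        have t2 : |S * hhh g t| * |Real.cos (D * mmm t) - 1|
            ≤ (|S| * (1/2)) * (D^2 * (1/4)/2) :=
          mul_le_mul habs_a (hc1.trans (by linarith)) (abs_nonneg _) (by positivity)
        have e1 : (|S| * (1/2))^3/6 = |S|^3/48 := by ring
        have e2 : (|S| * (1/2)) * (D^2 * (1/4)/2) = |S| * D^2/16 := by ring
        linarith [ha3]

lemma cosprod_nonneg {S D g t : ℝ} (hS : |S| ≤ π) (hD : |D| ≤ π)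
    (hgu : g ≤ 0) (hgl : -(31/100) ≤ g) (ht : t ∈ Set.Icc (0:ℝ) 1) :
    0 ≤ Real.cos (S * hhh g t) * Real.cos (D * mmm t) := by
  have h1 : |S * hhh g t| ≤ π/2 := by
    rw [abs_mul]
    calc |S| * |hhh g t| ≤ π * (1/2) :=
      mul_le_mul hS (hh_abs' hgu hgl ht) (abs_nonneg _) Real.pi_pos.le
    _ = π/2 := by ring
  have h2 : |D * mmm t| ≤ π/2 := by
    rw [abs_mul]
    calc |D| * |mmm t| ≤ π * (1/2) :=
      mul_le_mul hD (mm_bound ht) (abs_nonneg _) Real.pi_pos.le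
    _ = π/2 := by ring
  have h1' := abs_le.1 h1
  have h2' := abs_le.1 h2
  exact mul_nonneg
    (Real.cos_nonneg_of_mem_Icc ⟨h1'.1, h1'.2⟩)
    (Real.cos_nonneg_of_mem_Icc ⟨h2'.1, h2'.2⟩)

lemma mid_lower {S D g t : ℝ} (hSsq : S^2 ≤ 987/100) (hDsq : D^2 ≤ 987/100)
    (hgu : g ≤ 0) (hgl : -(31/100) ≤ g) (ht : t ∈ Set.Icc (1/4:ℝ) (3/4)) :
    (1/3:ℝ) ≤ Real.cos (S * hhh g t) * Real.cos (D * mmm t) := by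
  have ht' : t ∈ Set.Icc (0:ℝ) 1 := ⟨by linarith [ht.1], by linarith [ht.2]⟩
  have hu : (2*t-1)^2 ≤ 1/4 := by nlinarith [ht.1, ht.2]
  have h4t : 0 ≤ 4*t*(1-t) := by nlinarith [ht'.1, ht'.2]
  have hub : hhh g t ≤ 1/8 := by
    unfold hhh
    nlinarith [mul_nonpos_of_nonpos_of_nonneg hgu h4t]
  have hlb : -(31/100) ≤ hhh g t := le_trans hgl (hh_lb' hgu ht')
  have hsq : (hhh g t)^2 ≤ (31/100)^2 := by nlinarith
  have hSh : (S * hhh g t)^2 ≤ (987/100) * (961/10000) := by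
    rw [mul_pow]
    exact mul_le_mul hSsq (by nlinarith) (sq_nonneg _) (by norm_num)
  have hmabs : (mmm t)^2 ≤ (1/4)^2 := by
    unfold mmm; nlinarith [ht.1, ht.2]
  have hDm : (D * mmm t)^2 ≤ (987/100) * (1/16) := by
    rw [mul_pow]
    exact mul_le_mul hDsq (by nlinarith) (sq_nonneg _) (by norm_num)
  have c1 := Real.one_sub_sq_div_two_le_cos (x := S * hhh g t)
  have c2 := Real.one_sub_sq_div_two_le_cos (x := D * mmm t)
  have hcos1 : (52:ℝ)/100 ≤ Real.cos (S * hhh g t) := by linarith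
  have hcos2 : (68:ℝ)/100 ≤ Real.cos (D * mmm t) := by linarith
  have := mul_le_mul hcos1 hcos2 (by norm_num) (by linarith)
  linarith

lemma final_num {x : ℝ} (hx : 0 ≤ x) : 3*π*((1/5)*x) ≤ 2*x := by
  nlinarith [Real.pi_lt_d2, Real.pi_pos]

set_option maxHeartbeats 1600000 in
/-- bound on the angle defect. On `B = [−π/2,π/2]²` the integral
`I(β)` is nonzero and the angle defect `δ(β₀,β₁) = arg I(β)` satisfies
`|δ(β₀,β₁)| ≤ min{c₁, c₂·|β₀+β₁|·(β₀²+β₁²)}` for some constants `c₁, c₂ > 0`. -/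
theorem angle_defect_bound :
    ∃ c1 > (0:ℝ), ∃ c2 > (0:ℝ), ∀ β0 β1 : ℝ,
      β0 ∈ Set.Icc (-(π / 2)) (π / 2) → β1 ∈ Set.Icc (-(π / 2)) (π / 2) →
      Iint (βfun β0 β1) 1 ≠ 0 ∧
      |(Iint (βfun β0 β1) 1).arg| ≤ min c1 (c2 * |β0 + β1| * (β0 ^ 2 + β1 ^ 2)) := by
  refine ⟨π, Real.pi_pos, 2, two_pos, ?_⟩
  intro b0 b1 hb0 hb1
  obtain ⟨hb0l, hb0r⟩ := hb0
  obtain ⟨hb1l, hb1r⟩ := hb1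
  have hpi : (π:ℝ) < 3.15 := Real.pi_lt_d2
  have hpi4 : (π:ℝ) < 3.1416 := Real.pi_lt_d4
  obtain ⟨q, hq_def⟩ : ∃ q : ℝ, q = b0^2 + b1^2 := ⟨_, rfl⟩
  obtain ⟨g, hg_def⟩ : ∃ g : ℝ, g = q/68 - b0*b1/46 - 1/4 := ⟨_, rfl⟩
  obtain ⟨S, hS_def⟩ : ∃ S : ℝ, S = b0 + b1 := ⟨_, rfl⟩
  obtain ⟨D, hD_def⟩ : ∃ D : ℝ, D = b0 - b1 := ⟨_, rfl⟩
  have hπ2 : π^2 ≤ 987/100 := by nlinarith [Real.pi_pos]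
  have hb0sq : b0^2 ≤ π^2/4 := by nlinarith [sq_le_sq' (by linarith : -(π/2) ≤ b0) hb0r]
  have hb1sq : b1^2 ≤ π^2/4 := by nlinarith [sq_le_sq' (by linarith : -(π/2) ≤ b1) hb1r]
  have hq0 : 0 ≤ q := by rw [hq_def]; positivity
  have hq_ub : q ≤ 494/100 := by rw [hq_def]; linarith
  have hbb1 : b0*b1 ≤ q/2 := by rw [hq_def]; nlinarith [sq_nonneg (b0-b1)]
  have hbb2 : -(q/2) ≤ b0*b1 := by rw [hq_def]; nlinarith [sq_nonneg (b0+b1)]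
  have hg_ub : g ≤ 0 := by rw [hg_def]; linarith
  have hg_lb : -(31/100) ≤ g := by rw [hg_def]; linarith
  have hS2 : S^2 ≤ 2*q := by rw [hS_def, hq_def]; nlinarith [sq_nonneg (b0-b1)]
  have hD2 : D^2 ≤ 2*q := by rw [hD_def, hq_def]; nlinarith [sq_nonneg (b0+b1)]
  have hSpi : |S| ≤ π := abs_le.2 ⟨by rw [hS_def]; linarith, by rw [hS_def]; linarith⟩
  have hDpi : |D| ≤ π := abs_le.2 ⟨by rw [hD_def]; linarith, by rw [hD_def]; linarith⟩
  have hSsq : S^2 ≤ 987/100 := by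
    have h := pow_le_pow_left₀ (abs_nonneg S) hSpi 2
    rw [← sq_abs]; linarith
  have hDsq : D^2 ≤ 987/100 := by
    have h := pow_le_pow_left₀ (abs_nonneg D) hDpi 2
    rw [← sq_abs]; linarith
  -- the real and imaginary parts
  obtain ⟨A, hA_def⟩ : ∃ A : ℝ, A = ∫ t in (0:ℝ)..1, Real.cos (βfun b0 b1 t) := ⟨_, rfl⟩
  obtain ⟨B, hB_def⟩ : ∃ B : ℝ, B = ∫ t in (0:ℝ)..1, Real.sin (βfun b0 b1 t) := ⟨_, rfl⟩
  have hcb : Continuous (βfun b0 b1) := beta_cont b0 b1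
  have hI : Iint (βfun b0 b1) 1 = (A:ℂ) + (B:ℂ) * Complex.I := by
    unfold Iint
    have hptw : ∀ s ∈ Set.uIcc (0:ℝ) 1,
        Complex.exp (Complex.I * (βfun b0 b1 s : ℂ)) =
          ((Real.cos (βfun b0 b1 s) : ℝ) : ℂ)
            + ((Real.sin (βfun b0 b1 s) : ℝ) : ℂ) * Complex.I := by
      intro s _
      rw [mul_comm, Complex.exp_mul_I, Complex.ofReal_cos, Complex.ofReal_sin]
    rw [intervalIntegral.integral_congr hptw,
      intervalIntegral.integral_add
        ((by fun_prop : Continuous fun s : ℝ =>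
          ((Real.cos (βfun b0 b1 s) : ℝ) : ℂ)).intervalIntegrable 0 1)
        ((by fun_prop : Continuous fun s : ℝ =>
          ((Real.sin (βfun b0 b1 s) : ℝ) : ℂ) * Complex.I).intervalIntegrable 0 1),
      intervalIntegral.integral_mul_const, intervalIntegral.integral_ofReal,
      intervalIntegral.integral_ofReal, hA_def, hB_def]
  have hre : (Iint (βfun b0 b1) 1).re = A := by rw [hI]; simp
  have him : (Iint (βfun b0 b1) 1).im = B := by rw [hI]; simp
  -- abbreviate β via the profiles
  have hbeta : ∀ t : ℝ, βfun b0 b1 t = D * mmm t + S * hhh g t := by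
    intro t; rw [hg_def, hq_def, hS_def, hD_def]; exact beta_eq b0 b1 t
  -- symmetrized expressions
  have hKc : Continuous fun t : ℝ => Real.sin (S * hhh g t) * Real.cos (D * mmm t) := by
    fun_prop
  have hLc : Continuous fun t : ℝ => Real.cos (S * hhh g t) * Real.cos (D * mmm t) := by
    fun_prop
  have hsinc : Continuous fun t : ℝ => Real.sin (βfun b0 b1 t) := by fun_prop
  have hcosc : Continuous fun t : ℝ => Real.cos (βfun b0 b1 t) := by fun_prop
  have hBK : B = ∫ t in (0:ℝ)..1, Real.sin (S * hhh g t) * Real.cos (D * mmm t) := by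
    have e2 : ∀ t : ℝ, Real.sin (βfun b0 b1 t) + Real.sin (βfun b0 b1 (1-t))
        = 2 * (Real.sin (S * hhh g t) * Real.cos (D * mmm t)) := by
      intro t
      rw [hbeta t, hbeta (1-t), mmm_flip, hhh_flip,
        show D * -mmm t + S * hhh g t = S * hhh g t - D * mmm t from by ring,
        Real.sin_sub, Real.sin_add]
      ring
    have h1 : B = ∫ t in (0:ℝ)..1, Real.sin (βfun b0 b1 (1-t)) := by
      rw [hB_def, ← flip_integral fun t => Real.sin (βfun b0 b1 t)]
    have h2 : B + B = ∫ t in (0:ℝ)..1,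
        (Real.sin (βfun b0 b1 t) + Real.sin (βfun b0 b1 (1-t))) := by
      rw [intervalIntegral.integral_add (hsinc.intervalIntegrable 0 1)
        ((by fun_prop : Continuous fun t : ℝ => Real.sin (βfun b0 b1 (1 - t))).intervalIntegrable 0 1)]
      rw [← hB_def, ← h1]
    have h3 : (∫ t in (0:ℝ)..1,
        (Real.sin (βfun b0 b1 t) + Real.sin (βfun b0 b1 (1-t))))
        = ∫ t in (0:ℝ)..1, 2 * (Real.sin (S * hhh g t) * Real.cos (D * mmm t)) :=
      intervalIntegral.integral_congr (fun t _ => e2 t)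
    rw [h3, intervalIntegral.integral_const_mul] at h2
    linarith
  have hAL : A = ∫ t in (0:ℝ)..1, Real.cos (S * hhh g t) * Real.cos (D * mmm t) := by
    have e2 : ∀ t : ℝ, Real.cos (βfun b0 b1 t) + Real.cos (βfun b0 b1 (1-t))
        = 2 * (Real.cos (S * hhh g t) * Real.cos (D * mmm t)) := by
      intro t
      rw [hbeta t, hbeta (1-t), mmm_flip, hhh_flip,
        show D * -mmm t + S * hhh g t = S * hhh g t - D * mmm t from by ring,
        Real.cos_sub, Real.cos_add]
      ring
    have h1 : A = ∫ t in (0:ℝ)..1, Real.cos (βfun b0 b1 (1-t)) := by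
      rw [hA_def, ← flip_integral fun t => Real.cos (βfun b0 b1 t)]
    have h2 : A + A = ∫ t in (0:ℝ)..1,
        (Real.cos (βfun b0 b1 t) + Real.cos (βfun b0 b1 (1-t))) := by
      rw [intervalIntegral.integral_add (hcosc.intervalIntegrable 0 1)
        ((by fun_prop : Continuous fun t : ℝ => Real.cos (βfun b0 b1 (1 - t))).intervalIntegrable 0 1)]
      rw [← hA_def, ← h1]
    have h3 : (∫ t in (0:ℝ)..1,
        (Real.cos (βfun b0 b1 t) + Real.cos (βfun b0 b1 (1-t))))
        = ∫ t in (0:ℝ)..1, 2 * (Real.cos (S * hhh g t) * Real.cos (D * mmm t)) :=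
      intervalIntegral.integral_congr (fun t _ => e2 t)
    rw [h3, intervalIntegral.integral_const_mul] at h2
    linarith
  -- bound on |B|
  have hptB : ∀ t ∈ Set.uIoc (0:ℝ) 1,
      ‖Real.sin (S * hhh g t) * Real.cos (D * mmm t) - S * hhh g t‖
        ≤ |S|^3/48 + |S| * D^2/16 := by
    intro t ht
    rw [Set.uIoc_of_le (by norm_num : (0:ℝ) ≤ 1)] at ht
    exact K_pointwise hg_ub hg_lb ⟨ht.1.le, ht.2⟩
  have hB1 : |B - S * (2*g/3 + 1/6)| ≤ |S|^3/48 + |S| * D^2/16 := by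
    have hint : (∫ t in (0:ℝ)..1,
        (Real.sin (S * hhh g t) * Real.cos (D * mmm t) - S * hhh g t))
        = B - S * (2*g/3 + 1/6) := by
      rw [intervalIntegral.integral_sub (hKc.intervalIntegrable 0 1)
        ((by fun_prop : Continuous fun t : ℝ => S * hhh g t).intervalIntegrable 0 1),
        intervalIntegral.integral_const_mul, hhh_integral, ← hBK]
    have := intervalIntegral.norm_integral_le_of_norm_le_const hptB
    rw [hint, Real.norm_eq_abs] at this
    simpa using this
  have hBfin : |B| ≤ (1/5) * (|S| * q) := by
    have h2g : |2*g/3 + 1/6| ≤ q/50 := by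
      rw [abs_le, hg_def]
      constructor <;> linarith
    have htri : |B| ≤ |B - S * (2*g/3 + 1/6)| + |S| * |2*g/3 + 1/6| := by
      calc |B| = |(B - S * (2*g/3 + 1/6)) + S * (2*g/3 + 1/6)| := by congr 1; ring
        _ ≤ |B - S * (2*g/3 + 1/6)| + |S * (2*g/3 + 1/6)| := abs_add_le _ _
        _ = |B - S * (2*g/3 + 1/6)| + |S| * |2*g/3 + 1/6| := by rw [abs_mul]
    have hS3 : |S|^3 ≤ |S| * (2*q) := by
      calc |S|^3 = |S| * |S|^2 := by ring
        _ = |S| * S^2 := by rw [sq_abs]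
        _ ≤ |S| * (2*q) := mul_le_mul_of_nonneg_left hS2 (abs_nonneg S)
    have p1 : |S| * |2*g/3 + 1/6| ≤ |S| * (q/50) :=
      mul_le_mul_of_nonneg_left h2g (abs_nonneg S)
    have p3 : |S| * D^2 ≤ |S| * (2*q) :=
      mul_le_mul_of_nonneg_left hD2 (abs_nonneg S)
    have e1 : |S| * (q/50) = (|S| * q)/50 := by ring
    have e2 : |S| * (2*q) = 2 * (|S| * q) := by ring
    have hx : 0 ≤ |S| * q := mul_nonneg (abs_nonneg S) hq0
    linarith [htri, hB1, hS3]
  -- lower bound on A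
  have hmid : (1/6:ℝ) ≤ ∫ t in (1/4:ℝ)..(3/4),
      Real.cos (S * hhh g t) * Real.cos (D * mmm t) := by
    have hmono := intervalIntegral.integral_mono_on (by norm_num : (1/4:ℝ) ≤ 3/4)
      (intervalIntegrable_const (μ := MeasureTheory.volume) (c := (1/3:ℝ)))
      (hLc.intervalIntegrable (1/4) (3/4))
      (fun t ht => mid_lower hSsq hDsq hg_ub hg_lb ht)
    rw [intervalIntegral.integral_const] at hmono
    simp at hmono
    linarith
  have hA : (1/6:ℝ) ≤ A := by
    have hadd1 : (∫ t in (0:ℝ)..(1/4), Real.cos (S * hhh g t) * Real.cos (D * mmm t))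
        + (∫ t in (1/4:ℝ)..1, Real.cos (S * hhh g t) * Real.cos (D * mmm t))
        = ∫ t in (0:ℝ)..1, Real.cos (S * hhh g t) * Real.cos (D * mmm t) :=
      intervalIntegral.integral_add_adjacent_intervals
        (hLc.intervalIntegrable 0 (1/4)) (hLc.intervalIntegrable (1/4) 1)
    have hadd2 : (∫ t in (1/4:ℝ)..(3/4), Real.cos (S * hhh g t) * Real.cos (D * mmm t))
        + (∫ t in (3/4:ℝ)..1, Real.cos (S * hhh g t) * Real.cos (D * mmm t))
        = ∫ t in (1/4:ℝ)..1, Real.cos (S * hhh g t) * Real.cos (D * mmm t) :=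
      intervalIntegral.integral_add_adjacent_intervals
        (hLc.intervalIntegrable (1/4) (3/4)) (hLc.intervalIntegrable (3/4) 1)
    have h0a : 0 ≤ ∫ t in (0:ℝ)..(1/4), Real.cos (S * hhh g t) * Real.cos (D * mmm t) :=
      intervalIntegral.integral_nonneg (by norm_num)
        (fun u hu => cosprod_nonneg hSpi hDpi hg_ub hg_lb ⟨hu.1, by linarith [hu.2]⟩)
    have h0b : 0 ≤ ∫ t in (3/4:ℝ)..1, Real.cos (S * hhh g t) * Real.cos (D * mmm t) :=
      intervalIntegral.integral_nonneg (by norm_num)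
        (fun u hu => cosprod_nonneg hSpi hDpi hg_ub hg_lb ⟨by linarith [hu.1], hu.2⟩)
    rw [hAL]
    linarith
  -- conclusion
  have hzre : 0 < (Iint (βfun b0 b1) 1).re := by rw [hre]; linarith
  have hne : Iint (βfun b0 b1) 1 ≠ 0 := by
    intro h0; rw [h0] at hzre; simp at hzre
  refine ⟨hne, le_min (Complex.abs_arg_le_pi _) ?_⟩
  have habsz : A ≤ ‖Iint (βfun b0 b1) 1‖ := hre ▸ Complex.re_le_norm _
  have habszpos : (0:ℝ) < ‖Iint (βfun b0 b1) 1‖ := by linarith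
  have hargle : |(Iint (βfun b0 b1) 1).arg| ≤ π/2 :=
    Complex.abs_arg_le_pi_div_two_iff.2 hzre.le
  have hsin : Real.sin ((Iint (βfun b0 b1) 1).arg)
      = B / ‖Iint (βfun b0 b1) 1‖ := him ▸ Complex.sin_arg _
  have hj : 2/π * |(Iint (βfun b0 b1) 1).arg|
      ≤ |Real.sin ((Iint (βfun b0 b1) 1).arg)| := Real.mul_abs_le_abs_sin hargle
  have hs_eq : |Real.sin ((Iint (βfun b0 b1) 1).arg)|
      = |B| / ‖Iint (βfun b0 b1) 1‖ := by
    rw [hsin, abs_div, abs_of_pos habszpos]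
  have h1 : |B| / ‖Iint (βfun b0 b1) 1‖ ≤ 6 * |B| := by
    rw [div_le_iff₀ habszpos]
    nlinarith [abs_nonneg B]
  have h2 : 2/π * |(Iint (βfun b0 b1) 1).arg| ≤ 6 * |B| := by
    rw [hs_eq] at hj; linarith
  have h3 : |(Iint (βfun b0 b1) 1).arg| ≤ 3 * π * |B| := by
    have hπ0 : (0:ℝ) < π := Real.pi_pos
    calc |(Iint (βfun b0 b1) 1).arg|
        = (π/2) * (2/π * |(Iint (βfun b0 b1) 1).arg|) := by field_simp
      _ ≤ (π/2) * (6 * |B|) := mul_le_mul_of_nonneg_left h2 (by positivity)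
      _ = 3 * π * |B| := by ring
  rw [show b0 + b1 = S from hS_def.symm, show b0^2 + b1^2 = q from hq_def.symm]
  calc |(Iint (βfun b0 b1) 1).arg| ≤ 3 * π * |B| := h3
    _ ≤ 3 * π * ((1/5) * (|S| * q)) :=
        mul_le_mul_of_nonneg_left hBfin (by positivity)
    _ ≤ 2 * (|S| * q) := final_num (mul_nonneg (abs_nonneg S) hq0)
    _ = 2 * |S| * q := by ring
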